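/- Let f(x) = x² − x − 3, g(x) = x² − 5x + 5, and for n ≥ 2 let Pₙ(x) = det(Δₙ − xI) be the characteristic polynomial of the adjacency matrix Δₙ = aₙ + bₙ + cₙ. Then, as an identity of polynomials with rational coefficients, Pₙ(x) = −(x−3) · x^{αₙ} · (f(x))^{α_{n−1}} ⋯ (f^{n−1}(x))^{α₁} · (x+2)^{βₙ} · (g(x+2))^{β_{n−1}} ⋯ (g^{n−2}(x+2))^{β₂}, where αₘ = (3^{m−1}+3)/2 and βₘ = (3^{m−1}−1)/2. Moreover P₀(x) = −(x−3) and P₁(x) = −(x−3)x². -/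

import Mathlib

open Polynomial

/-- Generator matrix `aₙ` (size `3ⁿ × 3ⁿ`, indexed by ternary words of length `n`):
`a₀ = [1]`, `a_{n+1} = [[0ₙ,1ₙ,0ₙ],[1ₙ,0ₙ,0ₙ],[0ₙ,0ₙ,aₙ]]` in block form. -/
def hanoiGenA : (n : ℕ) → Matrix (Fin n → Fin 3) (Fin n → Fin 3) ℚ
  | 0 => 1
  | n + 1 => Matrix.of fun u v =>
      (![![0, 1, 0],
         ![1, 0, 0],
         ![0, 0, hanoiGenA n]] :
        Fin 3 → Fin 3 → Matrix (Fin n → Fin 3) (Fin n → Fin 3) ℚ)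
        (u 0) (v 0) (Fin.tail u) (Fin.tail v)

/-- `b₀ = [1]`, `b_{n+1} = [[0ₙ,0ₙ,1ₙ],[0ₙ,bₙ,0ₙ],[1ₙ,0ₙ,0ₙ]]`. -/
def hanoiGenB : (n : ℕ) → Matrix (Fin n → Fin 3) (Fin n → Fin 3) ℚ
  | 0 => 1
  | n + 1 => Matrix.of fun u v =>
      (![![0, 0, 1],
         ![0, hanoiGenB n, 0],
         ![1, 0, 0]] :
        Fin 3 → Fin 3 → Matrix (Fin n → Fin 3) (Fin n → Fin 3) ℚ)
        (u 0) (v 0) (Fin.tail u) (Fin.tail v)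

/-- `c₀ = [1]`, `c_{n+1} = [[cₙ,0ₙ,0ₙ],[0ₙ,0ₙ,1ₙ],[0ₙ,1ₙ,0ₙ]]`. -/
def hanoiGenC : (n : ℕ) → Matrix (Fin n → Fin 3) (Fin n → Fin 3) ℚ
  | 0 => 1
  | n + 1 => Matrix.of fun u v =>
      (![![hanoiGenC n, 0, 0],
         ![0, 0, 1],
         ![0, 1, 0]] :
        Fin 3 → Fin 3 → Matrix (Fin n → Fin 3) (Fin n → Fin 3) ℚ)
        (u 0) (v 0) (Fin.tail u) (Fin.tail v)

/-- The adjacency matrix `Δₙ = aₙ + bₙ + cₙ` of the level-`n` Schreier graph of the Hanoi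
Towers group on three pegs. -/
def hanoiAdj (n : ℕ) : Matrix (Fin n → Fin 3) (Fin n → Fin 3) ℚ :=
  hanoiGenA n + hanoiGenB n + hanoiGenC n

/-- `Pₙ(x) = det(Δₙ - x·I)`, the characteristic polynomial of `Δₙ` (in the sign convention
of the paper), as a polynomial with rational coefficients. -/
noncomputable def hanoiCharP (n : ℕ) : ℚ[X] :=
  Matrix.det ((hanoiAdj n).map C - (X : ℚ[X]) • 1)

/-- `f(X) = X² - X - 3` in `ℚ[X]`. -/
noncomputable def hanoiFpoly : ℚ[X] := X ^ 2 - X - 3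

/-- `g(X) = X² - 5X + 5` in `ℚ[X]`. -/
noncomputable def hanoiGpoly : ℚ[X] := X ^ 2 - 5 * X + 5

/-- The `k`-th iterate `f^k` of `f` under composition (`f⁰(X) = X`). -/
noncomputable def hanoiFiter : ℕ → ℚ[X]
  | 0 => X
  | k + 1 => hanoiFpoly.comp (hanoiFiter k)

/-- The `k`-th iterate `g^k` of `g` under composition (`g⁰(X) = X`). -/
noncomputable def hanoiGiter : ℕ → ℚ[X]
  | 0 => X
  | k + 1 => hanoiGpoly.comp (hanoiGiter k)

/-- `αₘ = (3^{m-1} + 3)/2`. -/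
def hanoiAlpha (m : ℕ) : ℕ := (3 ^ (m - 1) + 3) / 2

/-- `βₘ = (3^{m-1} - 1)/2`. -/
def hanoiBeta (m : ℕ) : ℕ := (3 ^ (m - 1) - 1) / 2


-- ===== auxiliary development =====

namespace HanoiAux

/-- exponent eₙ = (3ⁿ-1)/2 via recursion -/
def hEx : ℕ → ℕ
  | 0 => 0
  | n + 1 => 3 ^ n + hEx n

lemma two_hEx (n : ℕ) : 2 * hEx n + 1 = 3 ^ n := by
  induction n with
  | zero => simp [hEx]
  | succ n ih => rw [hEx]; ring_nf; omega

/-- splitting equiv for words of length n+1 -/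
def tE (n : ℕ) : (Fin (n + 1) → Fin 3) ≃ (Fin n → Fin 3) × Fin 3 where
  toFun u := (Fin.tail u, u 0)
  invFun p := Fin.cons p.2 p.1
  left_inv u := Fin.cons_self_tail u
  right_inv p := by simp

variable {σ : Type*} [Fintype σ] [DecidableEq σ]
set_option linter.unusedSectionVars false

/-- 3×3 block matrix constructor -/
def blk (F : Fin 3 → Fin 3 → Matrix σ σ ℚ) : Matrix (σ × Fin 3) (σ × Fin 3) ℚ :=
  Matrix.of fun p q => F p.2 q.2 p.1 q.1

lemma blk_mul (F G : Fin 3 → Fin 3 → Matrix σ σ ℚ) :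
    blk F * blk G = blk fun i j => ∑ k, F i k * G k j := by
  ext ⟨u, i⟩ ⟨v, j⟩
  simp only [blk, Matrix.mul_apply, Matrix.of_apply, Fintype.sum_prod_type,
    Matrix.sum_apply]
  rw [Finset.sum_comm]

lemma blk_one : (blk fun i j => if i = j then (1 : Matrix σ σ ℚ) else 0) = 1 := by
  ext ⟨u, i⟩ ⟨v, j⟩
  simp only [blk, Matrix.of_apply, Matrix.one_apply, Prod.mk.injEq]
  by_cases h : i = j <;> by_cases h' : u = v <;> simp [h, h', Matrix.one_apply]

lemma reindex_genA (n : ℕ) :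
    Matrix.reindex (tE n) (tE n) (hanoiGenA (n + 1)) =
      blk ![![0, 1, 0], ![1, 0, 0], ![0, 0, hanoiGenA n]] := by
  ext ⟨u, i⟩ ⟨v, j⟩
  simp [tE, blk, hanoiGenA, Fin.tail_cons, Fin.cons_zero]

lemma reindex_genB (n : ℕ) :
    Matrix.reindex (tE n) (tE n) (hanoiGenB (n + 1)) =
      blk ![![0, 0, 1], ![0, hanoiGenB n, 0], ![1, 0, 0]] := by
  ext ⟨u, i⟩ ⟨v, j⟩
  simp [tE, blk, hanoiGenB, Fin.tail_cons, Fin.cons_zero]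

lemma reindex_genC (n : ℕ) :
    Matrix.reindex (tE n) (tE n) (hanoiGenC (n + 1)) =
      blk ![![hanoiGenC n, 0, 0], ![0, 0, 1], ![0, 1, 0]] := by
  ext ⟨u, i⟩ ⟨v, j⟩
  simp [tE, blk, hanoiGenC, Fin.tail_cons, Fin.cons_zero]

end HanoiAux

namespace HanoiAux
variable {σ : Type*} [Fintype σ] [DecidableEq σ]
set_option linter.unusedSectionVars false

lemma sq_genA : ∀ n : ℕ, hanoiGenA n * hanoiGenA n = 1
  | 0 => by simp [hanoiGenA]
  | (n + 1) => by
    have ih := sq_genA n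
    apply (Matrix.reindexAlgEquiv ℚ ℚ (tE n)).injective
    rw [map_mul, map_one, Matrix.reindexAlgEquiv_apply, reindex_genA, blk_mul]
    refine Eq.trans (congrArg blk ?_) blk_one
    funext i j
    fin_cases i <;> fin_cases j <;> simp [Fin.sum_univ_three, ih, Matrix.vecHead, Matrix.vecTail]

lemma sq_genB : ∀ n : ℕ, hanoiGenB n * hanoiGenB n = 1
  | 0 => by simp [hanoiGenB]
  | (n + 1) => by
    have ih := sq_genB n
    apply (Matrix.reindexAlgEquiv ℚ ℚ (tE n)).injective
    rw [map_mul, map_one, Matrix.reindexAlgEquiv_apply, reindex_genB, blk_mul]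
    refine Eq.trans (congrArg blk ?_) blk_one
    funext i j
    fin_cases i <;> fin_cases j <;> simp [Fin.sum_univ_three, ih, Matrix.vecHead, Matrix.vecTail]

lemma sq_genC : ∀ n : ℕ, hanoiGenC n * hanoiGenC n = 1
  | 0 => by simp [hanoiGenC]
  | (n + 1) => by
    have ih := sq_genC n
    apply (Matrix.reindexAlgEquiv ℚ ℚ (tE n)).injective
    rw [map_mul, map_one, Matrix.reindexAlgEquiv_apply, reindex_genC, blk_mul]
    refine Eq.trans (congrArg blk ?_) blk_one
    funext i j
    fin_cases i <;> fin_cases j <;> simp [Fin.sum_univ_three, ih, Matrix.vecHead, Matrix.vecTail]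

end HanoiAux

namespace HanoiAux
variable {σ : Type*} [Fintype σ] [DecidableEq σ]
set_option linter.unusedSectionVars false

lemma card_words (n : ℕ) : Fintype.card (Fin n → Fin 3) = 3 ^ n := by simp

/-- order (0,1,2) -/
def eFst : σ × Fin 3 ≃ (σ ⊕ σ) ⊕ σ where
  toFun p := match p with
    | (u, 0) => Sum.inl (Sum.inl u) | (u, 1) => Sum.inl (Sum.inr u) | (u, 2) => Sum.inr u
  invFun q := match q with
    | Sum.inl (Sum.inl u) => (u, 0) | Sum.inl (Sum.inr u) => (u, 1) | Sum.inr u => (u, 2)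
  left_inv := by rintro ⟨u, i⟩; fin_cases i <;> rfl
  right_inv := by rintro ((u | u) | u) <;> rfl

/-- order (0,2,1) -/
def eSnd : σ × Fin 3 ≃ (σ ⊕ σ) ⊕ σ where
  toFun p := match p with
    | (u, 0) => Sum.inl (Sum.inl u) | (u, 2) => Sum.inl (Sum.inr u) | (u, 1) => Sum.inr u
  invFun q := match q with
    | Sum.inl (Sum.inl u) => (u, 0) | Sum.inl (Sum.inr u) => (u, 2) | Sum.inr u => (u, 1)
  left_inv := by rintro ⟨u, i⟩; fin_cases i <;> rfl
  right_inv := by rintro ((u | u) | u) <;> rfl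

/-- order (1,2,0) -/
def eTrd : σ × Fin 3 ≃ (σ ⊕ σ) ⊕ σ where
  toFun p := match p with
    | (u, 1) => Sum.inl (Sum.inl u) | (u, 2) => Sum.inl (Sum.inr u) | (u, 0) => Sum.inr u
  invFun q := match q with
    | Sum.inl (Sum.inl u) => (u, 1) | Sum.inl (Sum.inr u) => (u, 2) | Sum.inr u => (u, 0)
  left_inv := by rintro ⟨u, i⟩; fin_cases i <;> rfl
  right_inv := by rintro ((u | u) | u) <;> rfl

lemma det_core (M : Matrix σ σ ℚ) (s : ℚ) (hs : s ≠ 0) :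
    (Matrix.fromBlocks
      (Matrix.fromBlocks ((-s) • (1 : Matrix σ σ ℚ)) 1 1 ((-s) • (1 : Matrix σ σ ℚ))) 0 0 M).det
      = (s ^ 2 - 1) ^ Fintype.card σ * M.det := by
  rw [Matrix.det_fromBlocks_zero₂₁]
  congr 1
  have hns : (-s) ≠ 0 := neg_ne_zero.mpr hs
  letI inst1 : Invertible ((-s) • (1 : Matrix σ σ ℚ)) :=
    ⟨(-s)⁻¹ • 1, by rw [Matrix.smul_mul, Matrix.mul_smul, smul_smul, one_mul,
        inv_mul_cancel₀ hns, one_smul], by rw [Matrix.smul_mul, Matrix.mul_smul, smul_smul,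
        one_mul, mul_inv_cancel₀ hns, one_smul]⟩
  rw [Matrix.det_fromBlocks₁₁]
  have hinv : (⅟((-s) • (1 : Matrix σ σ ℚ))) = (-s)⁻¹ • 1 := rfl
  rw [hinv, Matrix.one_mul, Matrix.mul_one, ← sub_smul, Matrix.det_smul, Matrix.det_smul,
    Matrix.det_one, mul_one, mul_one, ← mul_pow]
  congr 1
  field_simp
  ring

end HanoiAux

namespace HanoiAux
variable {σ : Type*} [Fintype σ] [DecidableEq σ]
set_option linter.unusedSectionVars false

lemma reindex_genA_sub (n : ℕ) (s : ℚ) :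
    Matrix.reindex (tE n) (tE n) (hanoiGenA (n + 1) - s • 1) =
      blk ![![(-s) • 1, 1, 0], ![1, (-s) • 1, 0], ![0, 0, hanoiGenA n - s • 1]] := by
  ext ⟨u, i⟩ ⟨v, j⟩
  fin_cases i <;> fin_cases j <;>
    simp [tE, blk, hanoiGenA, Matrix.one_apply, Fin.cons_inj, Matrix.vecHead,
      Matrix.vecTail, Matrix.sub_apply, Matrix.smul_apply, mul_ite, -Matrix.cons_val,
      Matrix.cons_val_zero, Matrix.cons_val_one, Matrix.cons_val_two]

lemma reindex_genB_sub (n : ℕ) (s : ℚ) :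
    Matrix.reindex (tE n) (tE n) (hanoiGenB (n + 1) - s • 1) =
      blk ![![(-s) • 1, 0, 1], ![0, hanoiGenB n - s • 1, 0], ![1, 0, (-s) • 1]] := by
  ext ⟨u, i⟩ ⟨v, j⟩
  fin_cases i <;> fin_cases j <;>
    simp [tE, blk, hanoiGenB, Matrix.one_apply, Fin.cons_inj, Matrix.vecHead,
      Matrix.vecTail, Matrix.sub_apply, Matrix.smul_apply, mul_ite, -Matrix.cons_val,
      Matrix.cons_val_zero, Matrix.cons_val_one, Matrix.cons_val_two]

lemma reindex_genC_sub (n : ℕ) (s : ℚ) :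
    Matrix.reindex (tE n) (tE n) (hanoiGenC (n + 1) - s • 1) =
      blk ![![hanoiGenC n - s • 1, 0, 0], ![0, (-s) • 1, 1], ![0, 1, (-s) • 1]] := by
  ext ⟨u, i⟩ ⟨v, j⟩
  fin_cases i <;> fin_cases j <;>
    simp [tE, blk, hanoiGenC, Matrix.one_apply, Fin.cons_inj, Matrix.vecHead,
      Matrix.vecTail, Matrix.sub_apply, Matrix.smul_apply, mul_ite, -Matrix.cons_val,
      Matrix.cons_val_zero, Matrix.cons_val_one, Matrix.cons_val_two]

lemma reindex_blkA (M : Matrix σ σ ℚ) (s : ℚ) :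
    Matrix.reindex eFst eFst (blk ![![(-s) • 1, 1, 0], ![1, (-s) • 1, 0], ![0, 0, M]]) =
      Matrix.fromBlocks
        (Matrix.fromBlocks ((-s) • (1 : Matrix σ σ ℚ)) 1 1 ((-s) • (1 : Matrix σ σ ℚ)))
        0 0 M := by
  ext p q
  rcases p with (⟨u⟩ | ⟨u⟩) | u <;> rcases q with (⟨v⟩ | ⟨v⟩) | v <;> rfl

lemma reindex_blkB (M : Matrix σ σ ℚ) (s : ℚ) :
    Matrix.reindex eSnd eSnd (blk ![![(-s) • 1, 0, 1], ![0, M, 0], ![1, 0, (-s) • 1]]) =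
      Matrix.fromBlocks
        (Matrix.fromBlocks ((-s) • (1 : Matrix σ σ ℚ)) 1 1 ((-s) • (1 : Matrix σ σ ℚ)))
        0 0 M := by
  ext p q
  rcases p with (⟨u⟩ | ⟨u⟩) | u <;> rcases q with (⟨v⟩ | ⟨v⟩) | v <;> rfl

lemma reindex_blkC (M : Matrix σ σ ℚ) (s : ℚ) :
    Matrix.reindex eTrd eTrd (blk ![![M, 0, 0], ![0, (-s) • 1, 1], ![0, 1, (-s) • 1]]) =
      Matrix.fromBlocks
        (Matrix.fromBlocks ((-s) • (1 : Matrix σ σ ℚ)) 1 1 ((-s) • (1 : Matrix σ σ ℚ)))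
        0 0 M := by
  ext p q
  rcases p with (⟨u⟩ | ⟨u⟩) | u <;> rcases q with (⟨v⟩ | ⟨v⟩) | v <;> rfl

lemma det_genA_sub : ∀ (n : ℕ) (s : ℚ), s ≠ 0 →
    (hanoiGenA n - s • 1).det = (1 - s) * (s ^ 2 - 1) ^ hEx n
  | 0, s, _ => by
    rw [Matrix.det_unique]
    simp [hanoiGenA, hEx, Matrix.one_apply]
  | (n + 1), s, hs => by
    rw [← Matrix.det_reindex_self (tE n), reindex_genA_sub,
      ← Matrix.det_reindex_self eFst, reindex_blkA, det_core _ s hs,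
      det_genA_sub n s hs, card_words, hEx]
    ring

lemma det_genB_sub : ∀ (n : ℕ) (s : ℚ), s ≠ 0 →
    (hanoiGenB n - s • 1).det = (1 - s) * (s ^ 2 - 1) ^ hEx n
  | 0, s, _ => by
    rw [Matrix.det_unique]
    simp [hanoiGenB, hEx, Matrix.one_apply]
  | (n + 1), s, hs => by
    rw [← Matrix.det_reindex_self (tE n), reindex_genB_sub,
      ← Matrix.det_reindex_self eSnd, reindex_blkB, det_core _ s hs,
      det_genB_sub n s hs, card_words, hEx]
    ring

lemma det_genC_sub : ∀ (n : ℕ) (s : ℚ), s ≠ 0 →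
    (hanoiGenC n - s • 1).det = (1 - s) * (s ^ 2 - 1) ^ hEx n
  | 0, s, _ => by
    rw [Matrix.det_unique]
    simp [hanoiGenC, hEx, Matrix.one_apply]
  | (n + 1), s, hs => by
    rw [← Matrix.det_reindex_self (tE n), reindex_genC_sub,
      ← Matrix.det_reindex_self eTrd, reindex_blkC, det_core _ s hs,
      det_genC_sub n s hs, card_words, hEx]
    ring

end HanoiAux

namespace HanoiAux
open Matrix
set_option linter.unusedSectionVars false
set_option maxHeartbeats 1000000

lemma key (n : ℕ) (x : ℚ) (h0 : x ≠ 0) (h1 : x + 1 ≠ 0) (h2 : x + 2 ≠ 0) :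
    (x * (x + 2)) ^ 3 ^ n * (hanoiAdj (n + 1) - x • 1).det =
      (-x) ^ 3 * (x * (x + 2)) ^ (3 * hEx n) * (-1 : ℚ) ^ 3 ^ n *
        (hanoiAdj n - (x ^ 2 - x - 3) • 1).det := by
  have hq : x * (x + 2) ≠ 0 := mul_ne_zero h0 h2
  set s : ℚ := x + 1 with hs
  set q : ℚ := x * (x + 2) with hqdef
  have hsq : 1 - s ^ 2 = -q := by rw [hs, hqdef]; ring
  set g : Fin 3 → Matrix (Fin n → Fin 3) (Fin n → Fin 3) ℚ :=
    ![hanoiGenC n, hanoiGenB n, hanoiGenA n] with hg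
  set D : Matrix ((Fin n → Fin 3) × Fin 3) ((Fin n → Fin 3) × Fin 3) ℚ :=
    Matrix.blockDiagonal (fun i => g i - s • 1) with hD
  set E : Matrix ((Fin n → Fin 3) × Fin 3) ((Fin n → Fin 3) × Fin 3) ℚ :=
    Matrix.blockDiagonal (fun i => (-q⁻¹) • (g i + s • 1)) with hE
  set V : Matrix ((Fin n → Fin 3) × Fin 3) (Fin n → Fin 3) ℚ :=
    Matrix.of (fun p w => if p.1 = w then 1 else 0) with hV
  -- step 1: block structure
  have hM : Matrix.reindex (tE n) (tE n) (hanoiAdj (n + 1) - x • 1) = D + V * Vᵀ := by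
    ext ⟨u, i⟩ ⟨v, j⟩
    have hVVT : (V * Vᵀ) (u, i) (v, j) = if u = v then 1 else 0 := by
      simp only [Matrix.mul_apply, hV, Matrix.transpose_apply, Matrix.of_apply,
        ite_mul, one_mul, zero_mul]
      rw [Finset.sum_ite_eq Finset.univ u fun w => if v = w then (1:ℚ) else 0]
      simp [eq_comm]
    simp only [Matrix.add_apply, hVVT]
    fin_cases i <;> fin_cases j <;>
      simp [tE, hanoiAdj, hanoiGenA, hanoiGenB, hanoiGenC, hD, hg,
        Matrix.blockDiagonal_apply, Matrix.one_apply, Fin.cons_inj,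
        Matrix.vecHead, Matrix.vecTail, Matrix.sub_apply, Matrix.smul_apply,
        Matrix.add_apply, mul_ite, hs, -Matrix.cons_val, Matrix.cons_val_zero,
        Matrix.cons_val_one, Matrix.cons_val_two] <;>
      try (rcases eq_or_ne u v with huv | huv <;> simp [huv] <;> try ring)
  -- step 2: D * E = 1
  have hDE : D * E = 1 := by
    have hblock : ∀ i : Fin 3, (g i - s • 1) * ((-q⁻¹) • (g i + s • 1)) = 1 := by
      intro i
      have hgg : g i * g i = 1 := by
        fin_cases i <;>
          simp [hg, Matrix.vecHead, Matrix.vecTail, sq_genA n, sq_genB n, sq_genC n]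
      have hexp : (g i - s • 1) * (g i + s • 1) = (1 - s ^ 2) • 1 := by
        rw [sub_mul, mul_add, mul_add, hgg, Matrix.mul_smul, Matrix.mul_one,
          Matrix.smul_mul, Matrix.one_mul, Matrix.smul_mul, Matrix.mul_smul,
          Matrix.mul_one, smul_smul]
        rw [sub_smul, one_smul, ← sq]
        abel
      rw [Matrix.mul_smul, hexp, smul_smul]
      have : -q⁻¹ * (1 - s ^ 2) = 1 := by rw [hsq]; field_simp
      rw [this, one_smul]
    have hfun : (fun i => (g i - s • 1) * ((-q⁻¹) • (g i + s • 1))) =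
        (1 : Fin 3 → Matrix (Fin n → Fin 3) (Fin n → Fin 3) ℚ) := funext hblock
    rw [hD, hE, ← Matrix.blockDiagonal_mul, hfun, Matrix.blockDiagonal_one]
  have hED : E * D = 1 := mul_eq_one_comm.mp hDE
  -- step 3: sandwich
  have hdet1 : (hanoiAdj (n + 1) - x • 1).det = (D + V * Vᵀ).det := by
    rw [← hM, Matrix.det_reindex_self]
  have hdetDE : D.det * E.det = 1 := by rw [← Matrix.det_mul, hDE, Matrix.det_one]
  have hdet2 : (D + V * Vᵀ).det = D.det * (1 + Vᵀ * (E * V)).det := by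
    have e1 : E * (D + V * Vᵀ) = 1 + (E * V) * Vᵀ := by
      rw [Matrix.mul_add, hED, Matrix.mul_assoc]
    rw [← Matrix.det_one_add_mul_comm (E * V) Vᵀ, ← e1, ← Matrix.det_mul,
      ← Matrix.mul_assoc, hDE, Matrix.one_mul]
  -- step 4: the inner matrix
  have hW : Vᵀ * (E * V) = (-q⁻¹) • (hanoiAdj n + (3 * s) • 1) := by
    have hEV : E * V = Matrix.of fun (p : (Fin n → Fin 3) × Fin 3) w =>
        ((-q⁻¹) • (g p.2 + s • 1)) p.1 w := by
      ext ⟨w, i⟩ v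
      simp only [Matrix.mul_apply, Fintype.sum_prod_type, hE, hV,
        Matrix.blockDiagonal_apply, Matrix.of_apply]
      rw [Finset.sum_comm]
      simp [Finset.sum_ite_eq']
    rw [hEV]
    ext u v
    simp only [Matrix.mul_apply, Fintype.sum_prod_type, hV, Matrix.transpose_apply,
      Matrix.of_apply, ite_mul, one_mul, zero_mul]
    rw [Finset.sum_comm]
    simp only [Finset.sum_ite_eq', Finset.mem_univ, if_true]
    rw [Fin.sum_univ_three]
    simp [hg, hanoiAdj, Matrix.vecHead, Matrix.vecTail, Matrix.smul_apply,
      Matrix.add_apply, Matrix.one_apply, mul_ite]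
    rcases eq_or_ne u v with huv | huv <;> simp [huv] <;> ring
  -- step 5: clear denominators
  have hfinal : (q : ℚ) ^ 3 ^ n * (1 + Vᵀ * (E * V)).det =
      (-1 : ℚ) ^ 3 ^ n * (hanoiAdj n - (x ^ 2 - x - 3) • 1).det := by
    have hq1 : q • (1 + Vᵀ * (E * V)) = -(hanoiAdj n - (x ^ 2 - x - 3) • 1) := by
      rw [hW, smul_add, smul_smul]
      have : q * -q⁻¹ = -1 := by field_simp
      rw [this, neg_one_smul]
      have h3s : q • (1 : Matrix (Fin n → Fin 3) (Fin n → Fin 3) ℚ) -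
          (hanoiAdj n + (3 * s) • 1) = -(hanoiAdj n - (x ^ 2 - x - 3) • 1) := by
        have : (x ^ 2 - x - 3 : ℚ) = q - 3 * s := by rw [hqdef, hs]; ring
        rw [this, sub_smul]
        abel
      rw [← h3s]
      abel
    calc q ^ 3 ^ n * (1 + Vᵀ * (E * V)).det
        = q ^ Fintype.card ((Fin n → Fin 3)) * (1 + Vᵀ * (E * V)).det := by
          rw [card_words]
      _ = (q • (1 + Vᵀ * (E * V))).det := by rw [Matrix.det_smul]
      _ = (-(hanoiAdj n - (x ^ 2 - x - 3) • 1)).det := by rw [hq1]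
      _ = (-1 : ℚ) ^ 3 ^ n * (hanoiAdj n - (x ^ 2 - x - 3) • 1).det := by
          rw [Matrix.det_neg, card_words]
  -- step 6: det D
  have hdetD : D.det = ((1 - s) * (s ^ 2 - 1) ^ hEx n) ^ 3 := by
    rw [hD, Matrix.det_blockDiagonal, Fin.prod_univ_three]
    simp only [hg, Matrix.cons_val_zero, Matrix.cons_val_one, Matrix.cons_val_two,
      Matrix.head_cons, Matrix.tail_cons]
    rw [det_genA_sub n s h1, det_genB_sub n s h1, det_genC_sub n s h1]
    ring
  -- assemble
  rw [hdet1, hdet2]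
  calc q ^ 3 ^ n * (D.det * (1 + Vᵀ * (E * V)).det)
      = D.det * (q ^ 3 ^ n * (1 + Vᵀ * (E * V)).det) := by ring
    _ = D.det * ((-1 : ℚ) ^ 3 ^ n * (hanoiAdj n - (x ^ 2 - x - 3) • 1).det) := by
        rw [hfinal]
    _ = (-x) ^ 3 * q ^ (3 * hEx n) * (-1 : ℚ) ^ 3 ^ n *
        (hanoiAdj n - (x ^ 2 - x - 3) • 1).det := by
        rw [hdetD]
        have e1 : (1 : ℚ) - s = -x := by rw [hs]; ring
        have e2 : s ^ 2 - 1 = q := by rw [hs, hqdef]; ring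
        rw [e1, e2]
        ring

end HanoiAux

namespace HanoiAux
open Polynomial
set_option linter.unusedSectionVars false
set_option maxHeartbeats 1000000

lemma charP_eval (n : ℕ) (x : ℚ) :
    (hanoiCharP n).eval x = (hanoiAdj n - x • 1).det := by
  have h := RingHom.map_det (Polynomial.evalRingHom x)
    ((hanoiAdj n).map Polynomial.C - (X : ℚ[X]) • 1)
  have h2 : (Polynomial.evalRingHom x).mapMatrix
      ((hanoiAdj n).map Polynomial.C - (X : ℚ[X]) • 1) = hanoiAdj n - x • 1 := by
    ext i j
    simp [Matrix.sub_apply, Matrix.smul_apply, Matrix.one_apply, apply_ite (eval x)]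
  rw [hanoiCharP]
  calc ((hanoiAdj n).map Polynomial.C - (X : ℚ[X]) • 1).det.eval x
      = (Polynomial.evalRingHom x) ((hanoiAdj n).map Polynomial.C - (X : ℚ[X]) • 1).det :=
        rfl
    _ = _ := by rw [h, h2]

lemma charP_zero : hanoiCharP 0 = -(X - 3) := by
  rw [hanoiCharP, Matrix.det_unique]
  simp [hanoiAdj, hanoiGenA, hanoiGenB, hanoiGenC, Matrix.sub_apply, Matrix.smul_apply,
    Matrix.one_apply, Matrix.add_apply]
  ring

lemma alpha_eq (n : ℕ) : hanoiAlpha (n + 1) = hEx n + 2 := by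
  have h := two_hEx n
  simp only [hanoiAlpha, Nat.add_sub_cancel]
  omega

lemma beta_eq (n : ℕ) : hanoiBeta (n + 1) = hEx n := by
  have h := two_hEx n
  simp only [hanoiBeta, Nat.add_sub_cancel]
  omega

lemma hEx_pos (n : ℕ) : 1 ≤ hEx (n + 1) := by
  have := two_hEx (n + 1)
  have h3 : (3:ℕ) ^ (n + 1) = 3 * 3 ^ n := by rw [pow_succ]; ring
  have h1 : (1:ℕ) ≤ 3 ^ n := Nat.one_le_pow _ _ (by norm_num)
  omega

/-- infinite set of good points -/
lemma good_infinite : {x : ℚ | x ≠ 0 ∧ x + 1 ≠ 0 ∧ x + 2 ≠ 0}.Infinite := by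
  have hfin : ({0, -1, -2} : Set ℚ).Finite := by
    apply Set.Finite.insert; apply Set.Finite.insert; exact Set.finite_singleton _
  have := hfin.infinite_compl
  apply Set.Infinite.mono _ this
  intro x hx
  simp only [Set.mem_compl_iff, Set.mem_insert_iff, Set.mem_singleton_iff, not_or] at hx
  refine ⟨hx.1, ?_, ?_⟩ <;> intro h <;> [exact hx.2.1 (by linarith); exact hx.2.2 (by linarith)]

lemma charP_one : hanoiCharP 1 = -(X - 3) * X ^ 2 := by
  apply Polynomial.eq_of_infinite_eval_eq
  apply Set.Infinite.mono _ good_infinite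
  rintro x ⟨h0, h1, h2⟩
  simp only [Set.mem_setOf_eq]
  have hk := key 0 x h0 h1 h2
  have hq : x * (x + 2) ≠ 0 := mul_ne_zero h0 h2
  rw [charP_eval] at *
  have hd0 : (hanoiAdj 0 - (x ^ 2 - x - 3) • 1).det = -(x ^ 2 - x - 3) + 3 := by
    rw [Matrix.det_unique]
    simp [hanoiAdj, hanoiGenA, hanoiGenB, hanoiGenC, Matrix.sub_apply, Matrix.smul_apply,
      Matrix.one_apply, Matrix.add_apply]
    ring
  rw [hd0] at hk
  simp only [hEx, pow_zero, pow_one, mul_zero, Nat.zero_add] at hk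
  apply mul_left_cancel₀ hq
  rw [hk]
  simp [Polynomial.eval_mul, Polynomial.eval_pow]
  ring

/-- main recursion -/
lemma charP_succ (m : ℕ) :
    hanoiCharP (m + 2) =
      X ^ (hEx (m + 1) + 2) * (X + 2) ^ (hEx (m + 1) - 1) *
        (hanoiCharP (m + 1)).comp hanoiFpoly := by
  apply Polynomial.eq_of_infinite_eval_eq
  apply Set.Infinite.mono _ good_infinite
  rintro x ⟨h0, h1, h2⟩
  simp only [Set.mem_setOf_eq]
  have hk := key (m + 1) x h0 h1 h2
  have hq : x * (x + 2) ≠ 0 := mul_ne_zero h0 h2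
  have hqn : (x * (x + 2)) ^ (3:ℕ) ^ (m + 1) ≠ 0 := pow_ne_zero _ hq
  have hodd : ((-1 : ℚ)) ^ (3:ℕ) ^ (m + 1) = -1 :=
    Odd.neg_one_pow (Odd.pow (by decide))
  have hsplit : 3 * hEx (m + 1) = 3 ^ (m + 1) + (hEx (m + 1) - 1) := by
    have := two_hEx (m + 1)
    have := hEx_pos m
    omega
  have hpow2 : hEx (m + 1) + 2 = (hEx (m + 1) - 1) + 3 := by
    have := hEx_pos m
    omega
  rw [charP_eval] at *
  apply mul_left_cancel₀ hqn
  rw [hk, hsplit, pow_add, hodd]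
  simp only [Polynomial.eval_mul, Polynomial.eval_pow, Polynomial.eval_comp,
    Polynomial.eval_add, Polynomial.eval_ofNat, Polynomial.eval_X]
  rw [charP_eval, hanoiFpoly]
  simp only [Polynomial.eval_sub, Polynomial.eval_pow, Polynomial.eval_X,
    Polynomial.eval_ofNat]
  rw [hpow2, pow_add, mul_pow, mul_pow x (x + 2) (hEx (m + 1) - 1)]
  ring

end HanoiAux

namespace HanoiAux
open Polynomial
set_option maxHeartbeats 1000000

lemma fiter_comp : ∀ k : ℕ, (hanoiFiter k).comp hanoiFpoly = hanoiFiter (k + 1)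
  | 0 => by simp [hanoiFiter]
  | (k + 1) => by
    show (hanoiFpoly.comp (hanoiFiter k)).comp hanoiFpoly = _
    rw [Polynomial.comp_assoc, fiter_comp k]
    rfl

lemma giter_comp : ∀ k : ℕ, (hanoiGiter k).comp hanoiGpoly = hanoiGiter (k + 1)
  | 0 => by simp [hanoiGiter]
  | (k + 1) => by
    show (hanoiGpoly.comp (hanoiGiter k)).comp hanoiGpoly = _
    rw [Polynomial.comp_assoc, giter_comp k]
    rfl

lemma X2_comp_f : ((X : ℚ[X]) + 2).comp hanoiFpoly = hanoiGpoly.comp (X + 2) := by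
  simp [hanoiFpoly, hanoiGpoly]
  ring

lemma gc_comp (k : ℕ) :
    (((hanoiGiter k).comp (X + 2)).comp hanoiFpoly) = (hanoiGiter (k + 1)).comp (X + 2) := by
  rw [Polynomial.comp_assoc, X2_comp_f, ← Polynomial.comp_assoc, giter_comp k]

lemma neg_comp_f : ((-(X - 3) : ℚ[X])).comp hanoiFpoly = -(X - 3) * (X + 2) := by
  simp [hanoiFpoly]
  ring

lemma gc_zero : ((hanoiGiter 0).comp (X + 2) : ℚ[X]) = X + 2 := by
  simp [hanoiGiter]

lemma formula : ∀ m : ℕ,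
    hanoiCharP (m + 1) =
      -(X - 3) * (∏ k ∈ Finset.range (m + 1), hanoiFiter k ^ hanoiAlpha (m + 1 - k)) *
        ∏ k ∈ Finset.range m, ((hanoiGiter k).comp (X + 2)) ^ hanoiBeta (m + 1 - k)
  | 0 => by
    rw [charP_one]
    simp [hanoiFiter, hanoiAlpha]
  | (m + 1) => by
    have IH := formula m
    rw [show m + 1 + 1 = m + 2 from rfl, charP_succ m, IH]
    -- expand composition
    simp only [Polynomial.mul_comp, Polynomial.neg_comp, Polynomial.sub_comp,
      Polynomial.X_comp, Polynomial.ofNat_comp, Polynomial.prod_comp, Polynomial.pow_comp]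
    -- rewrite iterates
    have hF : ∀ k ∈ Finset.range (m + 1),
        ((hanoiFiter k).comp hanoiFpoly) ^ hanoiAlpha (m + 1 - k) =
          hanoiFiter (k + 1) ^ hanoiAlpha (m + 1 - k) := by
      intro k _; rw [fiter_comp k]
    have hG : ∀ k ∈ Finset.range m,
        (((hanoiGiter k).comp (X + 2)).comp hanoiFpoly) ^ hanoiBeta (m + 1 - k) =
          ((hanoiGiter (k + 1)).comp (X + 2)) ^ hanoiBeta (m + 1 - k) := by
      intro k _; rw [gc_comp k]
    rw [Finset.prod_congr rfl hF, Finset.prod_congr rfl hG]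
    -- expand target products
    rw [Finset.prod_range_succ' (fun k => hanoiFiter k ^ hanoiAlpha (m + 2 - k)) (m + 1),
      Finset.prod_range_succ' (fun k => ((hanoiGiter k).comp (X + 2)) ^ hanoiBeta (m + 2 - k)) m]
    simp only [Nat.sub_zero, Nat.succ_sub_succ_eq_sub]
    rw [gc_zero]
    rw [show hanoiFiter 0 = X from rfl]
    rw [alpha_eq (m + 1), beta_eq (m + 1)]
    have hbe : (X + 2 : ℚ[X]) ^ hEx (m + 1) =
        (X + 2) ^ (hEx (m + 1) - 1) * (X + 2) := by
      rw [← pow_succ]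
      congr 1
      have := hEx_pos m
      omega
    rw [hbe]
    simp only [hanoiFpoly]
    ring

end HanoiAux


/-- The factorization of the characteristic polynomial of the adjacency matrix of the
level-`n` Schreier graph of the Hanoi Towers group on three pegs: for `n ≥ 2`,
`Pₙ(x) = -(x-3)·x^{αₙ}·f(x)^{α_{n-1}} ⋯ f^{n-1}(x)^{α₁} ·
(x+2)^{βₙ}·g(x+2)^{β_{n-1}} ⋯ g^{n-2}(x+2)^{β₂}`,
as an identity in `ℚ[X]`; moreover `P₀(x) = -(x-3)` and `P₁(x) = -(x-3)x²`. -/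
theorem hanoiCharP_factorization :
    (∀ n : ℕ, 2 ≤ n →
      hanoiCharP n =
        -(X - 3) * (∏ k ∈ Finset.range n, hanoiFiter k ^ hanoiAlpha (n - k)) *
          ∏ k ∈ Finset.range (n - 1),
            ((hanoiGiter k).comp (X + 2)) ^ hanoiBeta (n - k)) ∧
    hanoiCharP 0 = -(X - 3) ∧ hanoiCharP 1 = -(X - 3) * X ^ 2 := by
  refine ⟨?_, HanoiAux.charP_zero, HanoiAux.charP_one⟩
  intro n hn
  obtain ⟨m, rfl⟩ : ∃ m, n = m + 1 := ⟨n - 1, by omega⟩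
  simpa using HanoiAux.formula m
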